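/- Let d ≥ 1 and let Ψ : [0, ∞) → ℝ satisfy Ψ = M − N where M and N are bounded nondecreasing functions with M_0 := ∫_0^∞ r^{d−1} |M(r)| dr < ∞ and N_0 := ∫_0^∞ r^{d−1} |N(r)| dr < ∞. Then for all 1 ≤ λ ≤ μ, ∫_0^∞ r^{d−1} |Ψ(r λ^{1/d}) − Ψ(r μ^{1/d})| dr ≤ (M_0 + N_0)(λ^{−1} − μ^{−1}). -/

import Mathlib

open MeasureTheory

lemma stmt11_base_int (d : ℕ) (F : ℝ → ℝ)
    (hFmono : MonotoneOn F (Set.Ici 0))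
    (hFint : IntegrableOn (fun r : ℝ => r ^ (d - 1) * |F r|) (Set.Ioi 0)) :
    IntegrableOn (fun r : ℝ => r ^ (d - 1) * F r) (Set.Ioi 0) := by
  have hmeas : AEMeasurable F (volume.restrict (Set.Ioi (0:ℝ))) :=
    aemeasurable_restrict_of_monotoneOn measurableSet_Ioi
      (hFmono.mono Set.Ioi_subset_Ici_self)
  have hsm : AEStronglyMeasurable (fun r : ℝ => r ^ (d - 1) * F r)
      (volume.restrict (Set.Ioi (0:ℝ))) :=
    ((measurable_id.pow_const (d-1)).aemeasurable.mul hmeas).aestronglyMeasurable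
  refine Integrable.mono' hFint hsm ?_
  filter_upwards [ae_restrict_mem measurableSet_Ioi] with r hr
  rw [Real.norm_eq_abs, abs_mul, abs_of_nonneg (pow_nonneg (le_of_lt hr) _)]

lemma stmt11_scale_int (d : ℕ) (F : ℝ → ℝ)
    (hFmono : MonotoneOn F (Set.Ici 0))
    (hFint : IntegrableOn (fun r : ℝ => r ^ (d - 1) * |F r|) (Set.Ioi 0))
    {c : ℝ} (hc : 0 < c) :
    IntegrableOn (fun r : ℝ => r ^ (d - 1) * F (r * c)) (Set.Ioi 0) := by
  have h1 : IntegrableOn (fun s : ℝ => s ^ (d - 1) * F s) (Set.Ioi 0) :=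
    stmt11_base_int d F hFmono hFint
  have h2 : IntegrableOn (fun r : ℝ => (r * c) ^ (d - 1) * F (r * c)) (Set.Ioi 0) := by
    have := (integrableOn_Ioi_comp_mul_right_iff (fun s : ℝ => s ^ (d - 1) * F s) 0 hc).2
    simpa using this (by simpa using h1)
  have h3 := h2.const_mul ((c ^ (d - 1))⁻¹)
  refine IntegrableOn.congr_fun h3 (fun r hr => ?_) measurableSet_Ioi
  have hc' : (c : ℝ) ^ (d - 1) ≠ 0 := pow_ne_zero _ hc.ne'
  field_simp [mul_pow]
  ring

lemma stmt11_scale_eq (d : ℕ) (hd : 1 ≤ d) (F : ℝ → ℝ) {c : ℝ} (hc : 0 < c) :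
    ∫ r in Set.Ioi (0:ℝ), r ^ (d - 1) * F (r * c)
      = (c ^ d)⁻¹ * ∫ s in Set.Ioi (0:ℝ), s ^ (d - 1) * F s := by
  have hc' : (c : ℝ) ^ (d - 1) ≠ 0 := pow_ne_zero _ hc.ne'
  have step1 : ∫ r in Set.Ioi (0:ℝ), r ^ (d - 1) * F (r * c)
      = ∫ r in Set.Ioi (0:ℝ), (c ^ (d - 1))⁻¹ * ((r * c) ^ (d - 1) * F (r * c)) := by
    congr 1; funext r; field_simp [mul_pow]; ring
  rw [step1, integral_const_mul,
    integral_comp_mul_right_Ioi (fun s : ℝ => s ^ (d - 1) * F s) 0 hc]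
  simp only [zero_mul, smul_eq_mul]
  rw [← mul_assoc]
  congr 1
  rw [← mul_inv, ← pow_succ, Nat.sub_add_cancel hd]

/-- Let `Ψ = M − N` on `[0, ∞)` with `M, N` bounded nondecreasing and
`M_0 := ∫_0^∞ r^{d−1}|M(r)| dr < ∞`, `N_0 := ∫_0^∞ r^{d−1}|N(r)| dr < ∞`. Then for all
`1 ≤ λ ≤ μ`, `∫_0^∞ r^{d−1} |Ψ(r λ^{1/d}) − Ψ(r μ^{1/d})| dr ≤ (M_0 + N_0)(λ^{−1} − μ^{−1})`. -/
theorem stmt11 (d : ℕ) (hd : 1 ≤ d) (M N : ℝ → ℝ)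
    (hMmono : MonotoneOn M (Set.Ici 0)) (hNmono : MonotoneOn N (Set.Ici 0))
    (hMbd : ∃ c : ℝ, ∀ r ∈ Set.Ici (0 : ℝ), |M r| ≤ c)
    (hNbd : ∃ c : ℝ, ∀ r ∈ Set.Ici (0 : ℝ), |N r| ≤ c)
    (hMint : IntegrableOn (fun r : ℝ => r ^ (d - 1) * |M r|) (Set.Ioi 0))
    (hNint : IntegrableOn (fun r : ℝ => r ^ (d - 1) * |N r|) (Set.Ioi 0))
    (lam mu : ℝ) (hlam : 1 ≤ lam) (hlm : lam ≤ mu) :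
    ∫ r in Set.Ioi (0 : ℝ), r ^ (d - 1) *
        |(M (r * lam ^ ((1 : ℝ) / d)) - N (r * lam ^ ((1 : ℝ) / d))) -
          (M (r * mu ^ ((1 : ℝ) / d)) - N (r * mu ^ ((1 : ℝ) / d)))| ≤
      ((∫ r in Set.Ioi (0 : ℝ), r ^ (d - 1) * |M r|) +
        (∫ r in Set.Ioi (0 : ℝ), r ^ (d - 1) * |N r|)) * (lam⁻¹ - mu⁻¹) := by
  set a := lam ^ ((1:ℝ)/d) with ha_def
  set b := mu ^ ((1:ℝ)/d) with hb_def
  have hdR : (0:ℝ) < d := by exact_mod_cast Nat.lt_of_lt_of_le Nat.zero_lt_one hd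
  have hlam0 : (0:ℝ) < lam := lt_of_lt_of_le one_pos hlam
  have hmu0 : (0:ℝ) < mu := lt_of_lt_of_le hlam0 hlm
  have ha : 0 < a := Real.rpow_pos_of_pos hlam0 _
  have hb : 0 < b := Real.rpow_pos_of_pos hmu0 _
  have hab : a ≤ b := Real.rpow_le_rpow hlam0.le hlm (by positivity)
  have had : a ^ d = lam := by
    rw [ha_def, ← Real.rpow_natCast (lam ^ ((1:ℝ)/d)) d, ← Real.rpow_mul hlam0.le]
    rw [one_div_mul_cancel (ne_of_gt hdR), Real.rpow_one]
  have hbd : b ^ d = mu := by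
    rw [hb_def, ← Real.rpow_natCast (mu ^ ((1:ℝ)/d)) d, ← Real.rpow_mul hmu0.le]
    rw [one_div_mul_cancel (ne_of_gt hdR), Real.rpow_one]
  -- integrabilities
  have iMa := stmt11_scale_int d M hMmono hMint ha
  have iMb := stmt11_scale_int d M hMmono hMint hb
  have iNa := stmt11_scale_int d N hNmono hNint ha
  have iNb := stmt11_scale_int d N hNmono hNint hb
  set g : ℝ → ℝ := fun r => r ^ (d - 1) * ((M (r * b) - M (r * a)) + (N (r * b) - N (r * a)))
    with hg_def
  have hgint : IntegrableOn g (Set.Ioi 0) := by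
    have : g = fun r => ((r ^ (d-1) * M (r*b) - r ^ (d-1) * M (r*a))
        + (r ^ (d-1) * N (r*b) - r ^ (d-1) * N (r*a))) := by
      funext r; simp [hg_def]; ring
    rw [this]
    exact ((iMb.sub iMa).add (iNb.sub iNa))
  -- pointwise bound
  have hLHS : ∫ r in Set.Ioi (0 : ℝ), r ^ (d - 1) *
        |(M (r * a) - N (r * a)) - (M (r * b) - N (r * b))|
      ≤ ∫ r in Set.Ioi (0:ℝ), g r := by
    refine integral_mono_of_nonneg ?_ hgint ?_
    · filter_upwards [ae_restrict_mem measurableSet_Ioi] with r hr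
      have hr0 : (0:ℝ) < r := hr
      exact mul_nonneg (by positivity) (abs_nonneg _)
    · filter_upwards [ae_restrict_mem measurableSet_Ioi] with r hr
      have hr0 : (0:ℝ) < r := hr
      have hra : r * a ∈ Set.Ici (0:ℝ) := Set.mem_Ici.mpr (le_of_lt (by positivity))
      have hrb : r * b ∈ Set.Ici (0:ℝ) := Set.mem_Ici.mpr (le_of_lt (by positivity))
      have hrab : r * a ≤ r * b := mul_le_mul_of_nonneg_left hab hr0.le
      have hM' : M (r*a) ≤ M (r*b) := hMmono hra hrb hrab
      have hN' : N (r*a) ≤ N (r*b) := hNmono hra hrb hrab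
      have habs : |(M (r * a) - N (r * a)) - (M (r * b) - N (r * b))|
          ≤ (M (r*b) - M (r*a)) + (N (r*b) - N (r*a)) := by
        rw [abs_le]; constructor <;> [skip; skip] <;> nlinarith [abs_nonneg ((M (r * a) - N (r * a)) - (M (r * b) - N (r * b)))]
      calc r ^ (d-1) * |(M (r * a) - N (r * a)) - (M (r * b) - N (r * b))|
          ≤ r ^ (d-1) * ((M (r*b) - M (r*a)) + (N (r*b) - N (r*a))) :=
            mul_le_mul_of_nonneg_left habs (by positivity)
        _ = g r := rfl
  -- compute ∫ g
  set IM := ∫ s in Set.Ioi (0:ℝ), s ^ (d-1) * M s with hIM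
  set IN := ∫ s in Set.Ioi (0:ℝ), s ^ (d-1) * N s with hIN
  have hgval : ∫ r in Set.Ioi (0:ℝ), g r
      = (mu⁻¹ - lam⁻¹) * IM + (mu⁻¹ - lam⁻¹) * IN := by
    have e1 : ∫ r in Set.Ioi (0:ℝ), g r
        = ((∫ r in Set.Ioi (0:ℝ), r ^ (d-1) * M (r*b))
            - (∫ r in Set.Ioi (0:ℝ), r ^ (d-1) * M (r*a)))
          + ((∫ r in Set.Ioi (0:ℝ), r ^ (d-1) * N (r*b))
            - (∫ r in Set.Ioi (0:ℝ), r ^ (d-1) * N (r*a))) := by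
      have hM' : IntegrableOn (fun r : ℝ => r ^ (d-1) * M (r*b) - r ^ (d-1) * M (r*a))
          (Set.Ioi 0) := iMb.sub iMa
      have hN' : IntegrableOn (fun r : ℝ => r ^ (d-1) * N (r*b) - r ^ (d-1) * N (r*a))
          (Set.Ioi 0) := iNb.sub iNa
      calc ∫ r in Set.Ioi (0:ℝ), g r
          = ∫ r in Set.Ioi (0:ℝ), ((r ^ (d-1) * M (r*b) - r ^ (d-1) * M (r*a))
              + (r ^ (d-1) * N (r*b) - r ^ (d-1) * N (r*a))) := by
            refine integral_congr_ae (Filter.Eventually.of_forall fun r => ?_)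
            simp only [hg_def]; ring
        _ = _ := by
            rw [integral_add hM' hN', integral_sub iMb iMa, integral_sub iNb iNa]
    rw [e1, stmt11_scale_eq d hd M ha, stmt11_scale_eq d hd M hb,
      stmt11_scale_eq d hd N ha, stmt11_scale_eq d hd N hb, had, hbd, ← hIM, ← hIN]
    ring
  -- bound ∫ g
  have hMabs : |IM| ≤ ∫ r in Set.Ioi (0:ℝ), r ^ (d-1) * |M r| := by
    rw [hIM, ← Real.norm_eq_abs]
    refine (le_of_le_of_eq (norm_integral_le_integral_norm _) ?_)
    refine setIntegral_congr_fun measurableSet_Ioi (fun r hr => ?_)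
    rw [Real.norm_eq_abs, abs_mul, abs_of_nonneg (pow_nonneg (le_of_lt hr) _)]
  have hNabs : |IN| ≤ ∫ r in Set.Ioi (0:ℝ), r ^ (d-1) * |N r| := by
    rw [hIN, ← Real.norm_eq_abs]
    refine (le_of_le_of_eq (norm_integral_le_integral_norm _) ?_)
    refine setIntegral_congr_fun measurableSet_Ioi (fun r hr => ?_)
    rw [Real.norm_eq_abs, abs_mul, abs_of_nonneg (pow_nonneg (le_of_lt hr) _)]
  have hinv : lam⁻¹ - mu⁻¹ ≥ 0 := by
    have := inv_anti₀ hlam0 hlm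
    linarith
  refine hLHS.trans ?_
  rw [hgval]
  have h1 : (mu⁻¹ - lam⁻¹) * IM ≤ (lam⁻¹ - mu⁻¹) * |IM| := by
    have : (mu⁻¹ - lam⁻¹) * IM ≤ |(mu⁻¹ - lam⁻¹) * IM| := le_abs_self _
    rw [abs_mul] at this
    have h2 : |mu⁻¹ - lam⁻¹| = lam⁻¹ - mu⁻¹ := by rw [abs_sub_comm, abs_of_nonneg hinv]
    rw [h2] at this; exact this
  have h1' : (mu⁻¹ - lam⁻¹) * IN ≤ (lam⁻¹ - mu⁻¹) * |IN| := by
    have : (mu⁻¹ - lam⁻¹) * IN ≤ |(mu⁻¹ - lam⁻¹) * IN| := le_abs_self _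
    rw [abs_mul] at this
    have h2 : |mu⁻¹ - lam⁻¹| = lam⁻¹ - mu⁻¹ := by rw [abs_sub_comm, abs_of_nonneg hinv]
    rw [h2] at this; exact this
  nlinarith [mul_le_mul_of_nonneg_left hMabs hinv, mul_le_mul_of_nonneg_left hNabs hinv]
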